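/- Let u(X) = u₁(X) + i·u₂(X) with u₁, u₂ ∈ ℝ[[X₁, X₂]] satisfying u₁² + u₂² = 1, and let a(X) = X₁ + i·X₂. If a(X)·u(X) ∈ ℝ[[X₁, X₂]], then a contradiction arises: X₁ divides u₁ and X₂ divides u₂, forcing u(0) = 0, contradicting u₁(0)² + u₂(0)² = 1. Hence there is no unit-modulus power series u with a·u real. -/

import Mathlib

open MvPowerSeries Finsupp

lemma aux17 (f g : MvPowerSeries (Fin 2) ℝ) (i j : Fin 2) (hij : i ≠ j)
    (h : MvPowerSeries.X i * f + MvPowerSeries.X j * g = 0) :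
    MvPowerSeries.constantCoeff (σ := Fin 2) (R := ℝ) f = 0 := by
  have := congrArg (MvPowerSeries.coeff (R := ℝ) (Finsupp.single i 1)) h
  rw [map_add, map_zero, MvPowerSeries.X, MvPowerSeries.X,
    MvPowerSeries.coeff_monomial_mul, MvPowerSeries.coeff_monomial_mul] at this
  rw [if_pos le_rfl, tsub_self, if_neg] at this
  · simpa using this
  · intro hle
    have := hle j
    simp [Finsupp.single_apply, hij, hij.symm] at this
/-- There is no power series `u = u₁ + i u₂` of unit modulus (`u₁² + u₂² = 1`)
in `ℝ[[X₁, X₂]]` making `(X₁ + i X₂) · u` real: the vanishing of the imaginary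
part `X₁ u₂ + X₂ u₁ = 0` together with `u₁² + u₂² = 1` is contradictory. -/
theorem stmt17 (u₁ u₂ : MvPowerSeries (Fin 2) ℝ)
    (hunit : u₁ ^ 2 + u₂ ^ 2 = 1)
    (hreal : MvPowerSeries.X (0 : Fin 2) * u₂ + MvPowerSeries.X (1 : Fin 2) * u₁ = 0) :
    False := by
  have h2 : MvPowerSeries.constantCoeff (σ := Fin 2) (R := ℝ) u₂ = 0 :=
    aux17 u₂ u₁ 0 1 (by decide) hreal
  have h1 : MvPowerSeries.constantCoeff (σ := Fin 2) (R := ℝ) u₁ = 0 := by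
    refine aux17 u₁ u₂ 1 0 (by decide) ?_
    rw [add_comm]; exact hreal
  have := congrArg (MvPowerSeries.constantCoeff (σ := Fin 2) (R := ℝ)) hunit
  simp [h1, h2] at this
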